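/- Srivastava's double series identity: if (Δ_m) is a bounded sequence of complex numbers, ρ ∈ ℂ is not a nonpositive integer (and ρ/2, (ρ+1)/2 are not nonpositive integers), and x ∈ ℂ, then ∑_{m=0}^{∞} ∑_{n=0}^{∞} (−1)^n Δ_{m+n} x^{m+n} / ((ρ)_m (ρ)_n m! n!) = ∑_{m=0}^{∞} Δ_{2m} (−x²)^m / ( (ρ)_m (ρ/2)_m ((ρ+1)/2)_m 4^m m! ). -/

import Mathlib

set_option maxHeartbeats 1000000

noncomputable def poch (a : ℂ) (n : ℕ) : ℂ := (ascPochhammer ℂ n).eval a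

lemma poch_zero (a : ℂ) : poch a 0 = 1 := by simp [poch]

lemma poch_succ (a : ℂ) (n : ℕ) : poch a (n+1) = poch a n * (a + n) := by
  simp [poch, ascPochhammer_succ_right]

lemma poch_ne_zero {a : ℂ} (ha : ∀ k : ℕ, a ≠ -(k : ℂ)) (n : ℕ) : poch a n ≠ 0 := by
  induction n with
  | zero => simp [poch_zero]
  | succ k ih =>
    rw [poch_succ]
    refine mul_ne_zero ih ?_
    intro h
    exact ha k (by linear_combination h)

lemma addk_ne_zero {a : ℂ} (ha : ∀ k : ℕ, a ≠ -(k : ℂ)) (n : ℕ) : a + (n : ℂ) ≠ 0 := by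
  intro h; exact ha n (by linear_combination h)

lemma fact_ne_zero' (n : ℕ) : ((n.factorial : ℂ)) ≠ 0 :=
  Nat.cast_ne_zero.mpr (Nat.factorial_ne_zero n)

noncomputable def FF (ρ : ℂ) (N n : ℕ) : ℂ :=
  (-1)^n / (poch ρ n * poch ρ (N - n) * (n.factorial : ℂ) * ((N - n).factorial : ℂ))

noncomputable def SS (ρ : ℂ) (N : ℕ) : ℂ := ∑ n ∈ Finset.range (N+1), FF ρ N n

/-- Certificate polynomial (Zeilberger certificate numerator). -/
noncomputable def RR (ρ NN nn : ℂ) : ℂ :=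
  nn*(4+4*ρ-6*ρ^2-2*ρ^3 + NN*(10-3*ρ-7*ρ^2) + NN^2*(5-5*ρ))
  + nn^2*(-10-6*ρ+2*ρ^2 + NN*(-16-ρ) - 5*NN^2)
  + nn^3*(8+2*ρ+6*NN) - 2*nn^4

lemma cert_generic (ρ s t P Q U V : ℂ) (hP : P ≠ 0) (hQ : Q ≠ 0) (hU : U ≠ 0) (hV : V ≠ 0)
    (hA : ρ + s ≠ 0) (hB : ρ + t ≠ 0) (hB1 : ρ + t + 1 ≠ 0)
    (hs1 : s + 1 ≠ 0) (ht1 : t + 1 ≠ 0) (ht2 : t + 2 ≠ 0) :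
    (s+t+2)*(2*ρ+(s+t))*(ρ+(s+t))*(ρ+(s+t)+1)
        * (1 / (P * (Q*(ρ+t)*(ρ+t+1)) * U * (V*(t+1)*(t+2)))) + 4 * (1/(P*Q*U*V))
    = RR ρ (s+t) (s+1) * (-1 / ((P*(ρ+s)) * (Q*(ρ+t)) * (U*(s+1)) * (V*(t+1))))
      - RR ρ (s+t) s * (1 / (P * (Q*(ρ+t)*(ρ+t+1)) * U * (V*(t+1)*(t+2)))) := by
  have hD1 : P * (Q*(ρ+t)*(ρ+t+1)) * U * (V*(t+1)*(t+2)) ≠ 0 := by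
    apply_rules [mul_ne_zero]
  have hD2 : P*Q*U*V ≠ 0 := by apply_rules [mul_ne_zero]
  have hD3 : (P*(ρ+s)) * (Q*(ρ+t)) * (U*(s+1)) * (V*(t+1)) ≠ 0 := by
    apply_rules [mul_ne_zero]
  rw [mul_one_div, mul_one_div, div_add_div _ _ hD1 hD2,
    show RR ρ (s+t) (s+1) * (-1 / ((P*(ρ+s)) * (Q*(ρ+t)) * (U*(s+1)) * (V*(t+1))))
      = (-(RR ρ (s+t) (s+1))) / ((P*(ρ+s)) * (Q*(ρ+t)) * (U*(s+1)) * (V*(t+1))) by ring,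
    show RR ρ (s+t) s * (1 / (P * (Q*(ρ+t)*(ρ+t+1)) * U * (V*(t+1)*(t+2))))
      = RR ρ (s+t) s / (P * (Q*(ρ+t)*(ρ+t+1)) * U * (V*(t+1)*(t+2))) by ring,
    div_sub_div _ _ hD3 hD1, div_eq_div_iff (mul_ne_zero hD1 hD2) (mul_ne_zero hD3 hD1)]
  rw [RR, RR]
  ring

lemma cert_b1 (ρ NN P U : ℂ) (hP : P ≠ 0) (hU : U ≠ 0) (hr : ρ ≠ 0)
    (hB1 : ρ + NN + 1 ≠ 0) (hN2 : NN + 2 ≠ 0) :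
    (NN+2)*(2*ρ+NN)*(ρ+NN)*(ρ+NN+1) * (1/(P*ρ*U))
    = RR ρ NN (NN+2) * (-1/(P*(ρ+NN+1)*U*(NN+2))) - RR ρ NN (NN+1) * (1/(P*ρ*U)) := by
  have hD1 : P*ρ*U ≠ 0 := by apply_rules [mul_ne_zero]
  have hD2 : P*(ρ+NN+1)*U*(NN+2) ≠ 0 := by apply_rules [mul_ne_zero]
  rw [mul_one_div,
    show RR ρ NN (NN+2) * (-1/(P*(ρ+NN+1)*U*(NN+2)))
      = (-(RR ρ NN (NN+2))) / (P*(ρ+NN+1)*U*(NN+2)) by ring,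
    show RR ρ NN (NN+1) * (1/(P*ρ*U)) = RR ρ NN (NN+1) / (P*ρ*U) by ring,
    div_sub_div _ _ hD2 hD1, div_eq_div_iff hD1 (mul_ne_zero hD2 hD1)]
  rw [RR, RR]
  ring

lemma SS_odd (ρ : ℂ) (k : ℕ) : SS ρ (2*k+1) = 0 := by
  set N := 2*k+1 with hN
  have h : SS ρ N = -SS ρ N := by
    nth_rewrite 1 [SS, ← Finset.sum_range_reflect]
    rw [SS, ← Finset.sum_neg_distrib]
    apply Finset.sum_congr rfl
    intro n hn
    rw [Finset.mem_range] at hn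
    have hn' : n ≤ N := by omega
    have h1 : N + 1 - 1 - n = N - n := by omega
    have h2 : N - (N - n) = n := by omega
    rw [h1, FF, FF, h2]
    have hs : (-1 : ℂ)^(N - n) = -(-1 : ℂ)^n := by
      rcases Nat.even_or_odd n with he | ho
      · have hodd : Odd (N - n) := by
          rcases he with ⟨a, ha⟩; exact ⟨k - a, by omega⟩
        rw [hodd.neg_one_pow, he.neg_one_pow]
      · have hev : Even (N - n) := by
          rcases ho with ⟨a, ha⟩; exact ⟨k - a, by omega⟩
        rw [hev.neg_one_pow, ho.neg_one_pow]; norm_num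
    rw [hs]
    ring
  linear_combination h / 2

lemma SS_rec (ρ : ℂ) (hρ : ∀ k : ℕ, ρ ≠ -(k : ℂ)) (N : ℕ) :
    ((N:ℂ)+2)*(2*ρ+(N:ℂ))*(ρ+(N:ℂ))*(ρ+(N:ℂ)+1) * SS ρ (N+2) + 4 * SS ρ N = 0 := by
  set G : ℕ → ℂ := fun m => if m ≤ N+2 then RR ρ (N:ℂ) (m:ℂ) * FF ρ (N+2) m else 0 with hG
  have key : ∀ n ∈ Finset.range (N+3),
      ((N:ℂ)+2)*(2*ρ+(N:ℂ))*(ρ+(N:ℂ))*(ρ+(N:ℂ)+1) * FF ρ (N+2) n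
        + (if n ≤ N then 4 * FF ρ N n else 0) = G (n+1) - G n := by
    intro n hn
    rw [Finset.mem_range] at hn
    have hcase : n ≤ N ∨ n = N + 1 ∨ n = N + 2 := by omega
    rcases hcase with hle | h1 | h2
    · -- generic case
      obtain ⟨t, ht⟩ := Nat.exists_eq_add_of_le hle
      subst ht
      have e1 : n + t + 2 - n = t + 2 := by omega
      have e2 : n + t - n = t := by omega
      have e3 : n + t + 2 - (n + 1) = t + 1 := by omega
      rw [hG]
      simp only [if_pos (show n ≤ n + t from by omega),
        if_pos (show n + 1 ≤ n + t + 2 from by omega),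
        if_pos (show n ≤ n + t + 2 from by omega)]
      rw [FF, FF, FF, e1, e2, e3]
      have p1 : poch ρ (t+2) = poch ρ t * (ρ + (t:ℂ)) * (ρ + (t:ℂ) + 1) := by
        rw [poch_succ, poch_succ]; push_cast; ring
      have p2 : poch ρ (t+1) = poch ρ t * (ρ + (t:ℂ)) := by rw [poch_succ]
      have p3 : poch ρ (n+1) = poch ρ n * (ρ + (n:ℂ)) := by rw [poch_succ]
      have f1 : (((t+2).factorial : ℕ) : ℂ) = ((t.factorial : ℂ)) * ((t:ℂ)+1) * ((t:ℂ)+2) := by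
        rw [Nat.factorial_succ, Nat.factorial_succ]; push_cast; ring
      have f2 : (((t+1).factorial : ℕ) : ℂ) = ((t.factorial : ℂ)) * ((t:ℂ)+1) := by
        rw [Nat.factorial_succ]; push_cast; ring
      have f3 : (((n+1).factorial : ℕ) : ℂ) = ((n.factorial : ℂ)) * ((n:ℂ)+1) := by
        rw [Nat.factorial_succ]; push_cast; ring
      rw [p1, p2, p3, f1, f2, f3, pow_succ]
      have hP := poch_ne_zero hρ n
      have hQ := poch_ne_zero hρ t
      have hU := fact_ne_zero' n
      have hV := fact_ne_zero' t
      have hA : ρ + (n:ℂ) ≠ 0 := addk_ne_zero hρ n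
      have hB : ρ + (t:ℂ) ≠ 0 := addk_ne_zero hρ t
      have hB1 : ρ + (t:ℂ) + 1 ≠ 0 := by
        have h := addk_ne_zero hρ (t+1); push_cast at h
        intro hx; exact h (by linear_combination hx)
      have hn1 : ((n:ℂ)+1) ≠ 0 := by
        have h : ((n+1 : ℕ) : ℂ) ≠ 0 := Nat.cast_ne_zero.mpr (by omega)
        push_cast at h; exact h
      have ht1 : ((t:ℂ)+1) ≠ 0 := by
        have h : ((t+1 : ℕ) : ℂ) ≠ 0 := Nat.cast_ne_zero.mpr (by omega)
        push_cast at h; exact h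
      have ht2 : ((t:ℂ)+2) ≠ 0 := by
        have h : ((t+2 : ℕ) : ℂ) ≠ 0 := Nat.cast_ne_zero.mpr (by omega)
        push_cast at h; exact h
      push_cast
      linear_combination ((-1:ℂ)^n) *
        cert_generic ρ (n:ℂ) (t:ℂ) (poch ρ n) (poch ρ t) ((n.factorial : ℂ))
          ((t.factorial : ℂ)) hP hQ hU hV hA hB hB1 hn1 ht1 ht2
    · -- n = N+1
      subst h1
      rw [hG]
      simp only [if_neg (show ¬ (N+1 ≤ N) from by omega),
        if_pos (show N + 1 + 1 ≤ N + 2 from by omega),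
        if_pos (show N + 1 ≤ N + 2 from by omega)]
      have e1 : N + 2 - (N+1) = 1 := by omega
      have e2 : N + 2 - (N+1+1) = 0 := by omega
      rw [FF, FF, e1, e2]
      have p1 : poch ρ 1 = ρ := by
        rw [show (1:ℕ) = 0 + 1 from rfl, poch_succ, poch_zero]; simp
      have p3 : poch ρ (N+1+1) = poch ρ (N+1) * (ρ + ((N:ℂ)+1)) := by
        rw [poch_succ]; push_cast; ring
      have f3 : (((N+1+1).factorial : ℕ) : ℂ) = (((N+1).factorial : ℂ)) * ((N:ℂ)+2) := by
        rw [Nat.factorial_succ]; push_cast; ring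
      rw [p1, p3, f3, poch_zero, pow_succ, Nat.factorial_one, Nat.factorial_zero]
      have hP := poch_ne_zero hρ (N+1)
      have hU := fact_ne_zero' (N+1)
      have hr0 : ρ ≠ 0 := by
        have := addk_ne_zero hρ 0; simpa using this
      have hB1 : ρ + (N:ℂ) + 1 ≠ 0 := by
        have h := addk_ne_zero hρ (N+1); push_cast at h
        intro hx; exact h (by linear_combination hx)
      have hN2 : ((N:ℂ)+2) ≠ 0 := by
        have h : ((N+2 : ℕ) : ℂ) ≠ 0 := Nat.cast_ne_zero.mpr (by omega)
        push_cast at h; exact h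
      push_cast
      rw [show ((N:ℂ)+1+1) = (N:ℂ)+2 by ring]
      linear_combination ((-1:ℂ)^(N+1)) *
        cert_b1 ρ (N:ℂ) (poch ρ (N+1)) (((N+1).factorial : ℂ)) hP hU hr0 hB1 hN2
    · -- n = N+2
      subst h2
      rw [hG]
      simp only [if_neg (show ¬ (N+2 ≤ N) from by omega),
        if_neg (show ¬ (N + 2 + 1 ≤ N + 2) from by omega),
        if_pos (show N + 2 ≤ N + 2 from by omega)]
      have hcR : RR ρ (N:ℂ) ((N+2 : ℕ) : ℂ)
          = -(((N:ℂ)+2)*(2*ρ+(N:ℂ))*(ρ+(N:ℂ))*(ρ+(N:ℂ)+1)) := by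
        rw [RR]; push_cast; ring
      rw [hcR]
      ring
  have e1 : ((N:ℂ)+2)*(2*ρ+(N:ℂ))*(ρ+(N:ℂ))*(ρ+(N:ℂ)+1) * SS ρ (N+2)
      = ∑ n ∈ Finset.range (N+3),
          ((N:ℂ)+2)*(2*ρ+(N:ℂ))*(ρ+(N:ℂ))*(ρ+(N:ℂ)+1) * FF ρ (N+2) n := by
    rw [SS, Finset.mul_sum]
  have e2 : 4 * SS ρ N
      = ∑ n ∈ Finset.range (N+3), (if n ≤ N then 4 * FF ρ N n else 0) := by
    have step1 : 4 * SS ρ N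
        = ∑ n ∈ Finset.range (N+1), (if n ≤ N then 4 * FF ρ N n else 0) := by
      rw [SS, Finset.mul_sum]
      apply Finset.sum_congr rfl
      intro n hn
      rw [Finset.mem_range] at hn
      rw [if_pos (by omega)]
    rw [step1]
    apply Finset.sum_subset (Finset.range_subset_range.mpr (by omega))
    intro x _ hx
    rw [Finset.mem_range] at hx
    exact if_neg (by omega)
  rw [e1, e2, ← Finset.sum_add_distrib, Finset.sum_congr rfl key,
    Finset.sum_range_sub G (N+3)]
  have hG0 : G 0 = 0 := by rw [hG]; simp [RR, FF]
  have hGend : G (N+3) = 0 := by rw [hG]; simp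
  rw [hG0, hGend, sub_zero]

lemma SS_even (ρ : ℂ) (hρ : ∀ k : ℕ, ρ ≠ -(k : ℂ))
    (hρ2 : ∀ k : ℕ, ρ / 2 ≠ -(k : ℂ)) (hρ3 : ∀ k : ℕ, (ρ + 1) / 2 ≠ -(k : ℂ)) (k : ℕ) :
    SS ρ (2*k) = (-1)^k /
      (poch ρ k * poch (ρ/2) k * poch ((ρ+1)/2) k * (4:ℂ)^k * (k.factorial : ℂ)) := by
  induction k with
  | zero => simp [SS, FF, poch_zero]
  | succ k ih =>
    have hrec := SS_rec ρ hρ (2*k)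
    have h2k : 2*(k+1) = 2*k+2 := by ring
    rw [h2k]
    have hk2 : ((2*k : ℕ):ℂ)+2 ≠ 0 := by
      have h : ((2*k+2 : ℕ) : ℂ) ≠ 0 := Nat.cast_ne_zero.mpr (by omega)
      push_cast at h ⊢; exact h
    have h2ρ : 2*ρ+((2*k : ℕ):ℂ) ≠ 0 := by
      intro hx; apply hρ k; push_cast at hx; linear_combination hx / 2
    have hρN : ρ+((2*k : ℕ):ℂ) ≠ 0 := addk_ne_zero hρ (2*k)
    have hρN1 : ρ+((2*k : ℕ):ℂ)+1 ≠ 0 := by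
      have h := addk_ne_zero hρ (2*k+1); push_cast at h ⊢
      intro hx; exact h (by linear_combination hx)
    have hC : (((2*k : ℕ):ℂ)+2)*(2*ρ+((2*k : ℕ):ℂ))*(ρ+((2*k : ℕ):ℂ))*(ρ+((2*k : ℕ):ℂ)+1) ≠ 0 := by
      apply_rules [mul_ne_zero]
    apply mul_left_cancel₀ hC
    rw [show (((2*k : ℕ):ℂ)+2)*(2*ρ+((2*k : ℕ):ℂ))*(ρ+((2*k : ℕ):ℂ))*(ρ+((2*k : ℕ):ℂ)+1)
          * SS ρ (2*k+2) = -(4 * SS ρ (2*k)) by linear_combination hrec]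
    rw [ih]
    have hPk := poch_ne_zero hρ k
    have hP2 := poch_ne_zero hρ2 k
    have hP3 := poch_ne_zero hρ3 k
    have h4k : (4:ℂ)^k ≠ 0 := pow_ne_zero k (by norm_num)
    have hfk := fact_ne_zero' k
    have hk1 : ((k:ℂ)+1) ≠ 0 := by
      have h : ((k+1 : ℕ) : ℂ) ≠ 0 := Nat.cast_ne_zero.mpr (by omega)
      push_cast at h; exact h
    have hDk : poch ρ k * poch (ρ/2) k * poch ((ρ+1)/2) k * (4:ℂ)^k * (k.factorial : ℂ) ≠ 0 := by
      apply_rules [mul_ne_zero]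
    have p1 : poch ρ (k+1) = poch ρ k * (ρ + (k:ℂ)) := poch_succ ρ k
    have p2 : poch (ρ/2) (k+1) = poch (ρ/2) k * (ρ/2 + (k:ℂ)) := poch_succ _ k
    have p3 : poch ((ρ+1)/2) (k+1) = poch ((ρ+1)/2) k * ((ρ+1)/2 + (k:ℂ)) := poch_succ _ k
    have f1 : (((k+1).factorial : ℕ) : ℂ) = ((k.factorial : ℂ)) * ((k:ℂ)+1) := by
      rw [Nat.factorial_succ]; push_cast; ring
    rw [p1, p2, p3, f1, pow_succ]
    have hDk1 : poch ρ k * (ρ + (k:ℂ)) * (poch (ρ/2) k * (ρ/2 + (k:ℂ)))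
        * (poch ((ρ+1)/2) k * ((ρ+1)/2 + (k:ℂ))) * (4:ℂ)^(k+1)
        * ((k.factorial : ℂ) * ((k:ℂ)+1)) ≠ 0 := by
      apply_rules [mul_ne_zero, addk_ne_zero hρ k, addk_ne_zero hρ2 k, addk_ne_zero hρ3 k,
        pow_ne_zero]
      norm_num
    rw [show -(4 * ((-1:ℂ)^k / (poch ρ k * poch (ρ/2) k * poch ((ρ+1)/2) k * (4:ℂ)^k * (k.factorial : ℂ))))
        = (-(4 * (-1:ℂ)^k)) / (poch ρ k * poch (ρ/2) k * poch ((ρ+1)/2) k * (4:ℂ)^k * (k.factorial : ℂ)) by ring]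
    rw [← mul_div_assoc, div_eq_div_iff hDk hDk1]
    push_cast
    ring
theorem stmt5 (Δ : ℕ → ℂ) (hΔ : ∃ C : ℝ, ∀ m : ℕ, ‖Δ m‖ ≤ C)
    (ρ : ℂ) (hρ : ∀ k : ℕ, ρ ≠ -(k : ℂ))
    (hρ2 : ∀ k : ℕ, ρ / 2 ≠ -(k : ℂ)) (hρ3 : ∀ k : ℕ, (ρ + 1) / 2 ≠ -(k : ℂ))
    (x : ℂ) :
    ∑' (m : ℕ), ∑' (n : ℕ),
        (-1 : ℂ) ^ n * Δ (m + n) * x ^ (m + n) /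
          (poch ρ m * poch ρ n * m.factorial * n.factorial)
      = ∑' (m : ℕ), Δ (2 * m) * (-x ^ 2) ^ m /
          (poch ρ m * poch (ρ / 2) m * poch ((ρ + 1) / 2) m * (4 : ℂ) ^ m * m.factorial) := by
  obtain ⟨C, hC⟩ := hΔ
  set C' : ℝ := max C 0 with hC'def
  have hC' : ∀ m, ‖Δ m‖ ≤ C' := fun m => le_trans (hC m) (le_max_left _ _)
  have hC'0 : (0:ℝ) ≤ C' := le_max_right _ _
  set g : ℕ → ℝ := fun m => ‖x‖^m / (‖poch ρ m‖ * m.factorial) with hgdef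
  have hgnonneg : ∀ m, 0 ≤ g m := by
    intro m
    apply div_nonneg (pow_nonneg (norm_nonneg x) m)
    positivity
  have hgpos_den : ∀ m : ℕ, (0:ℝ) < ‖poch ρ m‖ * m.factorial := by
    intro m
    apply mul_pos
    · exact norm_pos_iff.mpr (poch_ne_zero hρ m)
    · exact_mod_cast Nat.factorial_pos m
  -- summability of g
  have hg : Summable g := by
    apply summable_of_ratio_norm_eventually_le (r := 1/2) (by norm_num)
    rw [Filter.eventually_atTop]
    refine ⟨⌈2*‖x‖ + ‖ρ‖⌉₊ + 1, fun m hm => ?_⟩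
    have hmR : (2*‖x‖ + ‖ρ‖ : ℝ) ≤ (m:ℝ) := by
      calc (2*‖x‖ + ‖ρ‖ : ℝ) ≤ (⌈2*‖x‖ + ‖ρ‖⌉₊ : ℝ) := Nat.le_ceil _
        _ ≤ (m:ℝ) := by exact_mod_cast Nat.le_of_lt (by omega)
    have hnormlow : 2*‖x‖ ≤ ‖ρ + (m:ℂ)‖ := by
      have h1 : ‖(m:ℂ)‖ ≤ ‖ρ + (m:ℂ)‖ + ‖ρ‖ := by
        calc ‖(m:ℂ)‖ = ‖(ρ + (m:ℂ)) + (-ρ)‖ := by ring_nf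
          _ ≤ ‖ρ + (m:ℂ)‖ + ‖(-ρ)‖ := norm_add_le _ _
          _ = ‖ρ + (m:ℂ)‖ + ‖ρ‖ := by rw [norm_neg]
      have h2 : ‖(m:ℂ)‖ = (m:ℝ) := by
        simp [Complex.norm_natCast]
      linarith
    have hrm_pos : (0:ℝ) < ‖ρ + (m:ℂ)‖ := norm_pos_iff.mpr (addk_ne_zero hρ m)
    have hfact : g (m+1) = g m * (‖x‖ / (‖ρ + (m:ℂ)‖ * ((m:ℝ)+1))) := by
      rw [hgdef]
      simp only
      rw [poch_succ, norm_mul, Nat.factorial_succ, pow_succ, Nat.cast_mul]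
      have d1 : ‖poch ρ m‖ ≠ 0 := ne_of_gt (norm_pos_iff.mpr (poch_ne_zero hρ m))
      have d2 : ((m.factorial : ℝ)) ≠ 0 := by
        exact_mod_cast Nat.factorial_ne_zero m
      have d3 : ‖ρ + (m:ℂ)‖ ≠ 0 := ne_of_gt hrm_pos
      have d4 : ((m:ℝ)+1) ≠ 0 := by positivity
      field_simp
      push_cast; ring
    have hbound : ‖x‖ / (‖ρ + (m:ℂ)‖ * ((m:ℝ)+1)) ≤ 1/2 := by
      rw [div_le_iff₀ (by positivity)]
      calc ‖x‖ = (2*‖x‖)/2 := by ring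
        _ ≤ ‖ρ + (m:ℂ)‖/2 := by linarith
        _ ≤ 1/2 * (‖ρ + (m:ℂ)‖ * ((m:ℝ)+1)) := by
            have h0 : (0:ℝ) ≤ (m:ℝ) := Nat.cast_nonneg m
            have : (1:ℝ) ≤ (m:ℝ)+1 := by linarith
            nlinarith
    rw [Real.norm_of_nonneg (hgnonneg (m+1)), Real.norm_of_nonneg (hgnonneg m), hfact]
    calc g m * (‖x‖ / (‖ρ + (m:ℂ)‖ * ((m:ℝ)+1))) ≤ g m * (1/2) :=
          mul_le_mul_of_nonneg_left hbound (hgnonneg m)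
      _ = 1/2 * g m := by ring
  -- the double-indexed function
  set f2 : ℕ × ℕ → ℂ := fun p => (-1 : ℂ) ^ p.2 * Δ (p.1 + p.2) * x ^ (p.1 + p.2) /
      (poch ρ p.1 * poch ρ p.2 * (p.1.factorial : ℂ) * (p.2.factorial : ℂ)) with hf2def
  have hnormf2 : ∀ p : ℕ × ℕ, ‖f2 p‖ = ‖Δ (p.1 + p.2)‖ * (g p.1 * g p.2) := by
    rintro ⟨m, n⟩
    rw [hf2def]
    simp only
    rw [norm_div, norm_mul, norm_mul, norm_pow, norm_neg, norm_one, one_pow, one_mul,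
      norm_pow, norm_mul, norm_mul, norm_mul, Complex.norm_natCast, Complex.norm_natCast,
      pow_add]
    rw [hgdef]
    simp only
    have d1 : ‖poch ρ m‖ ≠ 0 := ne_of_gt (norm_pos_iff.mpr (poch_ne_zero hρ m))
    have d2 : ‖poch ρ n‖ ≠ 0 := ne_of_gt (norm_pos_iff.mpr (poch_ne_zero hρ n))
    have d3 : ((m.factorial : ℝ)) ≠ 0 := by exact_mod_cast Nat.factorial_ne_zero m
    have d4 : ((n.factorial : ℝ)) ≠ 0 := by exact_mod_cast Nat.factorial_ne_zero n
    field_simp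
  have hf2 : Summable f2 := by
    apply Summable.of_norm_bounded
      ((hg.mul_of_nonneg hg hgnonneg hgnonneg).mul_left C')
    intro p
    rw [hnormf2 p]
    exact mul_le_mul_of_nonneg_right (hC' _) (mul_nonneg (hgnonneg _) (hgnonneg _))
  -- step 1: double tsum to antidiagonal sums
  have step0 : ∑' (m : ℕ), ∑' (n : ℕ),
      (-1 : ℂ) ^ n * Δ (m + n) * x ^ (m + n) /
        (poch ρ m * poch ρ n * m.factorial * n.factorial)
      = ∑' (m : ℕ), ∑' (n : ℕ), f2 (m, n) := by
    exact tsum_congr fun m => tsum_congr fun n => rfl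
  have step1 : ∑' (m : ℕ), ∑' (n : ℕ), f2 (m, n)
      = ∑' (N : ℕ), ∑ kl ∈ Finset.HasAntidiagonal.antidiagonal N, f2 kl := by
    rw [← Summable.tsum_prod hf2]
    rw [← Finset.HasAntidiagonal.sigmaAntidiagonalEquivProd.tsum_eq f2]
    conv_rhs => congr; ext; rw [← Finset.sum_finset_coe, ← tsum_fintype (L := .unconditional _)]
    exact Summable.tsum_sigma' (fun n => (hasSum_fintype _).summable)
      (Finset.HasAntidiagonal.sigmaAntidiagonalEquivProd.summable_iff.mpr hf2)
  have hanti : ∀ N : ℕ, ∑ kl ∈ Finset.HasAntidiagonal.antidiagonal N, f2 kl = Δ N * x^N * SS ρ N := by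
    intro N
    rw [Finset.Nat.sum_antidiagonal_eq_sum_range_succ_mk, SS, Finset.mul_sum,
      ← Finset.sum_range_reflect]
    apply Finset.sum_congr rfl
    intro j hj
    rw [Finset.mem_range] at hj
    have e1 : N + 1 - 1 - j = N - j := by omega
    have e2 : N - (N - j) = j := by omega
    rw [e1, hf2def]
    simp only
    rw [e2, FF]
    have e3 : N - j + j = N := by omega
    rw [e3]
    ring
  have step2 : ∑' (N : ℕ), Δ N * x^N * SS ρ N
      = ∑' (k : ℕ), Δ (2*k) * x^(2*k) * SS ρ (2*k) := by
    apply tsum_eq_tsum_of_ne_zero_bij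
      (i := fun k => 2 * (k.1 : ℕ))
    · intro a b hab
      simp only at hab
      exact Subtype.ext (by omega)
    · intro N hN
      simp only [Function.mem_support] at hN
      rcases Nat.even_or_odd N with ⟨k, hk⟩ | ⟨k, hk⟩
      · have h2 : N = 2 * k := by omega
        refine ⟨⟨k, ?_⟩, by simp only; omega⟩
        simp only [Function.mem_support]
        rw [← h2]
        exact hN
      · exfalso
        apply hN
        have h2 : N = 2*k+1 := by omega
        simp [h2, SS_odd]
    · intro k
      rfl
  have step3 : ∀ k : ℕ, Δ (2*k) * x^(2*k) * SS ρ (2*k)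
      = Δ (2 * k) * (-x ^ 2) ^ k /
          (poch ρ k * poch (ρ / 2) k * poch ((ρ + 1) / 2) k * (4 : ℂ) ^ k * k.factorial) := by
    intro k
    rw [SS_even ρ hρ hρ2 hρ3 k]
    rw [show ((-x^2 : ℂ))^k = (-1:ℂ)^k * x^(2*k) by rw [neg_pow, ← pow_mul]]
    ring
  rw [step0, step1]
  rw [tsum_congr hanti, step2, tsum_congr step3]
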